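/- The function Δ is continuous at every positive irrational point. At every positive rational point α₀, Δ is left-continuous, i.e., Δ(α) → Δ(α₀) as α → α₀ from the left, but not right-continuous, i.e., it is not the case that Δ(α) → Δ(α₀) as α → α₀ from the right. -/

import Mathlib

open Filter

/-- The digit sequence `u_α`: with `b = ⌈α⌉`, `u_α n = (b−1) + ⌈(α−b+1)(n+1)⌉ − ⌈(α−b+1)n⌉`,
the upper mechanical word of slope `α − b + 1` written over the alphabet `{b−1, b}`. -/
noncomputable def upperWord (α : ℝ) (n : ℕ) : ℤ :=
  (⌈α⌉ - 1) + (⌈(α - ⌈α⌉ + 1) * ((n : ℝ) + 1)⌉ - ⌈(α - ⌈α⌉ + 1) * (n : ℝ)⌉)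

/-- `Δ` is the devil's staircase function: `Δ 0 = 1` and, for each `α > 0`, `Δ α` is the
unique real `β > 1` satisfying `∑_{n=0}^∞ u_α(n)·β^{−(n+1)} = 1`. -/
def IsDevilStaircase (Δ : ℝ → ℝ) : Prop :=
  Δ 0 = 1 ∧ ∀ α : ℝ, 0 < α →
    (1 < Δ α ∧ ∑' n : ℕ, (upperWord α n : ℝ) / (Δ α) ^ (n + 1) = 1) ∧
    ∀ β : ℝ, 1 < β → (∑' n : ℕ, (upperWord α n : ℝ) / β ^ (n + 1) = 1) → β = Δ α

noncomputable def Wd (α x : ℝ) : ℝ := ∑' n : ℕ, (upperWord α n : ℝ) * x ^ (n + 1)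
noncomputable def Gd (α x : ℝ) : ℝ := ∑' n : ℕ, (⌈α * ((n : ℝ) + 1)⌉ : ℝ) * x ^ (n + 1)

lemma summable_ceil_pow {α x : ℝ} (hx : |x| < 1) (c : ℕ → ℕ) (hc : ∀ n, c n ≤ n + 1) :
    Summable (fun n : ℕ => (⌈α * (c n : ℝ)⌉ : ℝ) * x ^ (n + 1)) := by
  have hs : Summable (fun n : ℕ => (|α| + 1) * ((n + 1) * |x| ^ (n + 1))) := by
    apply Summable.mul_left
    have h1 : Summable (fun n : ℕ => (n : ℝ) * |x| ^ n) := by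
      simpa using summable_pow_mul_geometric_of_norm_lt_one 1
        (show ‖|x|‖ < 1 by rwa [Real.norm_eq_abs, abs_abs])
    have h2 : Summable (fun n : ℕ => |x| ^ n) :=
      summable_geometric_of_lt_one (abs_nonneg x) hx
    apply ((h1.add h2).mul_left |x|).congr
    intro n
    rw [pow_succ]; push_cast; ring
  apply Summable.of_norm_bounded hs
  intro n
  rw [norm_mul, norm_pow, Real.norm_eq_abs, Real.norm_eq_abs]
  have h1 : |(⌈α * (c n : ℝ)⌉ : ℝ)| ≤ (|α| + 1) * (n + 1) := by
    have hcl : (⌈α * (c n : ℝ)⌉ : ℝ) ≤ α * (c n : ℝ) + 1 := le_of_lt (Int.ceil_lt_add_one _)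
    have hcg : α * (c n : ℝ) ≤ (⌈α * (c n : ℝ)⌉ : ℝ) := Int.le_ceil _
    have hcb : |α * (c n : ℝ)| ≤ |α| * (n + 1) := by
      rw [abs_mul]
      have : |(c n : ℝ)| ≤ (n : ℝ) + 1 := by
        rw [abs_of_nonneg (by positivity)]
        exact_mod_cast hc n
      nlinarith [abs_nonneg α]
    rw [abs_le]; constructor <;> nlinarith [abs_le.mp (le_refl |α * (c n : ℝ)|), neg_abs_le (α * (c n : ℝ)), le_abs_self (α * (c n : ℝ))]
  calc |(⌈α * (c n : ℝ)⌉ : ℝ)| * |x| ^ (n + 1) ≤ ((|α| + 1) * (n + 1)) * |x| ^ (n + 1) := by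
        apply mul_le_mul_of_nonneg_right h1 (by positivity)
  _ = (|α| + 1) * ((n + 1) * |x| ^ (n + 1)) := by ring

lemma summable_Gd {α x : ℝ} (hx : |x| < 1) :
    Summable (fun n : ℕ => (⌈α * ((n : ℝ) + 1)⌉ : ℝ) * x ^ (n + 1)) := by
  have := summable_ceil_pow (α := α) hx (fun n => n + 1) (fun n => le_rfl)
  simpa using this

lemma summable_Sd {α x : ℝ} (hx : |x| < 1) :
    Summable (fun n : ℕ => (⌈α * (n : ℝ)⌉ : ℝ) * x ^ (n + 1)) :=
  summable_ceil_pow hx (fun n => n) (fun n => Nat.le_succ n)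

lemma ceil_mul_nat (α : ℝ) (m : ℕ) :
    ⌈α * m⌉ = (⌈α⌉ - 1) * m + ⌈(α - ⌈α⌉ + 1) * (m : ℝ)⌉ := by
  have h : α * m = (α - ⌈α⌉ + 1) * (m : ℝ) + (((⌈α⌉ - 1) * m : ℤ) : ℝ) := by
    push_cast; ring
  rw [h, Int.ceil_add_intCast]; ring

lemma upperWord_eq' (α : ℝ) (n : ℕ) :
    upperWord α n = ⌈α * ((n : ℝ) + 1)⌉ - ⌈α * n⌉ := by
  have h1 := ceil_mul_nat α (n + 1)
  have h2 := ceil_mul_nat α n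
  push_cast at h1
  rw [upperWord, h1, h2]; ring


lemma upperWord_nonneg {α : ℝ} (hα : 0 ≤ α) (n : ℕ) : 0 ≤ upperWord α n := by
  rw [upperWord_eq']
  have h : α * n ≤ α * ((n : ℝ) + 1) := by nlinarith
  have := Int.ceil_le_ceil h
  omega

lemma upperWord_le {α : ℝ} (n : ℕ) : upperWord α n ≤ ⌈α⌉ := by
  rw [upperWord_eq']
  have h : ⌈α * ((n : ℝ) + 1)⌉ ≤ ⌈α * n⌉ + ⌈α⌉ := by
    calc ⌈α * ((n : ℝ) + 1)⌉ = ⌈α * n + α⌉ := by ring_nf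
    _ ≤ ⌈α * n⌉ + ⌈α⌉ := Int.ceil_add_le _ _
  omega

lemma upperWord_zero (α : ℝ) : upperWord α 0 = ⌈α⌉ := by
  rw [upperWord_eq']; norm_num

lemma wd_term_eq (α x : ℝ) (n : ℕ) : (upperWord α n : ℝ) * x ^ (n + 1) =
    (⌈α * ((n : ℝ) + 1)⌉ : ℝ) * x ^ (n + 1) - (⌈α * (n : ℝ)⌉ : ℝ) * x ^ (n + 1) := by
  rw [upperWord_eq']; push_cast; ring

lemma summable_Wd {α x : ℝ} (hx : |x| < 1) :
    Summable (fun n : ℕ => (upperWord α n : ℝ) * x ^ (n + 1)) :=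
  ((summable_Gd hx).sub (summable_Sd hx)).congr (fun n => (wd_term_eq α x n).symm)

lemma wd_eq_gd {α x : ℝ} (hx : |x| < 1) : Wd α x = (1 - x) * Gd α x := by
  have hG := summable_Gd (α := α) hx
  have hS := summable_Sd (α := α) hx
  have h1 : Wd α x = Gd α x - ∑' n : ℕ, (⌈α * (n : ℝ)⌉ : ℝ) * x ^ (n + 1) := by
    rw [Wd, tsum_congr (wd_term_eq α x), Summable.tsum_sub hG hS]; rfl
  have h2 : ∑' n : ℕ, (⌈α * (n : ℝ)⌉ : ℝ) * x ^ (n + 1) = x * Gd α x := by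
    rw [Summable.tsum_eq_zero_add hS]
    have h0 : (⌈α * ((0 : ℕ) : ℝ)⌉ : ℝ) * x ^ (0 + 1) = 0 := by norm_num
    rw [h0, zero_add]
    have h3 : ∀ b : ℕ, (⌈α * ((b + 1 : ℕ) : ℝ)⌉ : ℝ) * x ^ (b + 1 + 1) =
        x * ((⌈α * ((b : ℝ) + 1)⌉ : ℝ) * x ^ (b + 1)) := by
      intro b; push_cast; ring
    rw [tsum_congr h3, tsum_mul_left]; rfl
  rw [h1, h2]; ring

lemma abs_lt_one_of_mem {x : ℝ} (h0 : 0 ≤ x) (h1 : x < 1) : |x| < 1 := by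
  rwa [abs_of_nonneg h0]

lemma gd_mono {α α' x : ℝ} (h : α ≤ α') (hx0 : 0 ≤ x) (hx1 : x < 1) : Gd α x ≤ Gd α' x := by
  apply Summable.tsum_le_tsum _ (summable_Gd (abs_lt_one_of_mem hx0 hx1))
    (summable_Gd (abs_lt_one_of_mem hx0 hx1))
  intro n
  have : (⌈α * ((n : ℝ) + 1)⌉ : ℝ) ≤ (⌈α' * ((n : ℝ) + 1)⌉ : ℝ) := by
    exact_mod_cast Int.ceil_le_ceil (by nlinarith)
  exact mul_le_mul_of_nonneg_right this (by positivity)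

lemma wd_mono {α α' x : ℝ} (h : α ≤ α') (hx0 : 0 ≤ x) (hx1 : x < 1) : Wd α x ≤ Wd α' x := by
  rw [wd_eq_gd (abs_lt_one_of_mem hx0 hx1), wd_eq_gd (abs_lt_one_of_mem hx0 hx1)]
  exact mul_le_mul_of_nonneg_left (gd_mono h hx0 hx1) (by linarith)

lemma wd_anti {α x x' : ℝ} (hα : 0 ≤ α) (h0 : 0 ≤ x') (h : x' ≤ x) (hx1 : x < 1) :
    Wd α x' ≤ Wd α x := by
  rw [Wd, Wd]
  apply Summable.tsum_le_tsum _ (summable_Wd (abs_lt_one_of_mem h0 (lt_of_le_of_lt h hx1)))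
    (summable_Wd (abs_lt_one_of_mem (le_trans h0 h) hx1))
  · intro n
    have hu : (0 : ℝ) ≤ (upperWord α n : ℝ) := by exact_mod_cast upperWord_nonneg hα n
    exact mul_le_mul_of_nonneg_left (pow_le_pow_left₀ h0 h _) hu

lemma wd_strict_anti {α x x' : ℝ} (hα : 0 < α) (h0 : 0 < x') (h : x' < x) (hx1 : x < 1) :
    Wd α x' < Wd α x := by
  rw [Wd, Wd]
  apply Summable.tsum_lt_tsum (i := 0) _ _
    (summable_Wd (abs_lt_one_of_mem (le_of_lt h0) (lt_trans h hx1)))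
    (summable_Wd (abs_lt_one_of_mem (le_of_lt (lt_trans h0 h)) hx1))
  · intro n
    have hu : (0 : ℝ) ≤ (upperWord α n : ℝ) := by exact_mod_cast upperWord_nonneg (le_of_lt hα) n
    exact mul_le_mul_of_nonneg_left (pow_le_pow_left₀ (le_of_lt h0) (le_of_lt h) _) hu
  · have hu : (1 : ℝ) ≤ (upperWord α 0 : ℝ) := by
      rw [upperWord_zero]
      exact_mod_cast Int.ceil_pos.mpr hα
    have hxx : x' ^ (0 + 1) < x ^ (0 + 1) := by simpa using h
    nlinarith [hxx, hu]

lemma sum_div_eq_wd (α β : ℝ) :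
    ∑' n : ℕ, (upperWord α n : ℝ) / β ^ (n + 1) = Wd α (1 / β) := by
  rw [Wd]
  exact tsum_congr fun n => by rw [one_div, inv_pow, div_eq_mul_inv]

section DeltaFacts
variable {Δ : ℝ → ℝ} (hΔ : IsDevilStaircase Δ) {α α' β : ℝ}
include hΔ

lemma delta_gt_one (hα : 0 < α) : 1 < Δ α := ((hΔ.2 α hα).1).1

lemma wd_delta (hα : 0 < α) : Wd α (1 / Δ α) = 1 := by
  rw [← sum_div_eq_wd]; exact ((hΔ.2 α hα).1).2

lemma inv_delta_pos (hα : 0 < α) : 0 < 1 / Δ α := by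
  have := delta_gt_one hΔ hα; positivity

lemma inv_delta_lt_one (hα : 0 < α) : 1 / Δ α < 1 := by
  have := delta_gt_one hΔ hα
  rw [div_lt_one (by linarith)]; linarith

lemma lt_delta_of_wd (hα : 0 < α) (hβ : 1 < β) (h : 1 < Wd α (1 / β)) : β < Δ α := by
  rcases lt_trichotomy β (Δ α) with h' | h' | h'
  · exact h'
  · rw [h', wd_delta hΔ hα] at h; exact absurd h (lt_irrefl 1)
  · exfalso
    have hb : 1 / β ≤ 1 / Δ α := by
      apply one_div_le_one_div_of_le (by linarith [delta_gt_one hΔ hα]) (le_of_lt h')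
    have := wd_anti (le_of_lt hα) (by positivity) hb (inv_delta_lt_one hΔ hα)
    rw [wd_delta hΔ hα] at this; linarith

lemma delta_lt_of_wd (hα : 0 < α) (hβ : 1 < β) (h : Wd α (1 / β) < 1) : Δ α < β := by
  rcases lt_trichotomy β (Δ α) with h' | h' | h'
  · exfalso
    have hb : 1 / Δ α ≤ 1 / β := by
      apply one_div_le_one_div_of_le (by linarith [delta_gt_one hΔ hα]) (le_of_lt h')
    have := wd_anti (le_of_lt hα) (inv_delta_pos hΔ hα).le hb
      (by rw [div_lt_one (by linarith)]; linarith)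
    rw [wd_delta hΔ hα] at this; linarith
  · rw [h', wd_delta hΔ hα] at h; exact absurd h (lt_irrefl 1)
  · exact h'

lemma delta_mono (hα : 0 < α) (h : α ≤ α') : Δ α ≤ Δ α' := by
  by_contra hc
  push_neg at hc
  have hα' : 0 < α' := lt_of_lt_of_le hα h
  have h1 : (1 : ℝ) ≤ Wd α' (1 / Δ α) := by
    have := wd_mono h (inv_delta_pos hΔ hα).le (inv_delta_lt_one hΔ hα)
    rwa [wd_delta hΔ hα] at this
  have h2 : Wd α' (1 / Δ α) < Wd α' (1 / Δ α') := by
    apply wd_strict_anti hα' (inv_delta_pos hΔ hα)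
      (by apply one_div_lt_one_div_of_lt (by linarith [delta_gt_one hΔ hα']) hc)
      (inv_delta_lt_one hΔ hα')
  rw [wd_delta hΔ hα'] at h2; linarith

end DeltaFacts

lemma summable_nat_succ_mul {x : ℝ} (h0 : 0 ≤ x) (hx : x < 1) :
    Summable (fun n : ℕ => ((n : ℝ) + 1) * x ^ (n + 1)) := by
  have h1 : Summable (fun n : ℕ => (n : ℝ) * x ^ n) := by
    simpa using summable_pow_mul_geometric_of_norm_lt_one 1
      (show ‖x‖ < 1 by rwa [Real.norm_eq_abs, abs_of_nonneg h0])
  have h2 : Summable (fun n : ℕ => x ^ n) := summable_geometric_of_lt_one h0 hx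
  apply ((h1.add h2).mul_left x).congr
  intro n
  rw [pow_succ]; ring

lemma gd_tendsto {α x : ℝ} (hx0 : 0 < x) (hx1 : x < 1) {l : Filter ℝ} (hl : l ≤ nhds α)
    (hceil : ∀ m : ℕ, ∀ᶠ α' in l, ⌈α' * ((m : ℝ) + 1)⌉ = ⌈α * ((m : ℝ) + 1)⌉) :
    Tendsto (fun α' => Gd α' x) l (nhds (Gd α x)) := by
  have hb : Tendsto (fun α' : ℝ => |α'|) l (nhds |α|) :=
    (continuous_abs.tendsto α).comp hl
  have hev : ∀ᶠ α' in l, |α'| < |α| + 1 := hb.eventually (eventually_lt_nhds (by linarith))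
  apply tendsto_tsum_of_dominated_convergence
    (bound := fun n : ℕ => (|α| + 2) * (((n : ℝ) + 1) * x ^ (n + 1)))
    (((summable_nat_succ_mul hx0.le hx1).mul_left _))
  · intro k
    apply Tendsto.congr' _ tendsto_const_nhds
    filter_upwards [hceil k] with α' h
    rw [h]
  · filter_upwards [hev] with α' h k
    rw [norm_mul, norm_pow, Real.norm_eq_abs, Real.norm_eq_abs, abs_of_nonneg hx0.le]
    have h1 : |(⌈α' * ((k : ℝ) + 1)⌉ : ℝ)| ≤ (|α'| + 1) * ((k : ℝ) + 1) := by
      have hcl : (⌈α' * ((k : ℝ) + 1)⌉ : ℝ) < α' * ((k : ℝ) + 1) + 1 := Int.ceil_lt_add_one _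
      have hcg : α' * ((k : ℝ) + 1) ≤ (⌈α' * ((k : ℝ) + 1)⌉ : ℝ) := Int.le_ceil _
      have hab : |α' * ((k : ℝ) + 1)| ≤ |α'| * ((k : ℝ) + 1) := by
        rw [abs_mul, abs_of_nonneg (by positivity : (0:ℝ) ≤ (k : ℝ) + 1)]
      rw [abs_le]
      constructor <;> nlinarith [neg_abs_le (α' * ((k : ℝ) + 1)), le_abs_self (α' * ((k : ℝ) + 1))]
    calc |(⌈α' * ((k : ℝ) + 1)⌉ : ℝ)| * x ^ (k + 1)
        ≤ ((|α'| + 1) * ((k : ℝ) + 1)) * x ^ (k + 1) :=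
          mul_le_mul_of_nonneg_right h1 (by positivity)
      _ ≤ (|α| + 2) * (((k : ℝ) + 1) * x ^ (k + 1)) := by
          have hp : (0:ℝ) ≤ x ^ (k+1) := pow_nonneg hx0.le _
          have hk : (0:ℝ) < (k:ℝ)+1 := by positivity
          nlinarith [mul_le_mul_of_nonneg_right (show |α'| + 1 ≤ |α| + 2 by linarith) (mul_nonneg hk.le hp)]

lemma wd_tendsto {α x : ℝ} (hx0 : 0 < x) (hx1 : x < 1) {l : Filter ℝ} (hl : l ≤ nhds α)
    (hceil : ∀ m : ℕ, ∀ᶠ α' in l, ⌈α' * ((m : ℝ) + 1)⌉ = ⌈α * ((m : ℝ) + 1)⌉) :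
    Tendsto (fun α' => Wd α' x) l (nhds (Wd α x)) := by
  have habs : |x| < 1 := by rwa [abs_of_nonneg hx0.le]
  have := ((gd_tendsto hx0 hx1 hl hceil).const_mul (1 - x))
  rw [← wd_eq_gd habs] at this
  exact this.congr fun α' => (wd_eq_gd habs).symm

lemma ceil_eventually_left (α : ℝ) (m : ℕ) :
    ∀ᶠ α' in nhdsWithin α (Set.Iio α), ⌈α' * ((m : ℝ) + 1)⌉ = ⌈α * ((m : ℝ) + 1)⌉ := by
  set M : ℝ := (m : ℝ) + 1 with hM
  have hM0 : 0 < M := by positivity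
  set c : ℝ := ((⌈α * M⌉ : ℝ) - 1) / M with hc
  have hcα : c < α := by
    rw [hc, div_lt_iff₀ hM0]
    have := Int.le_ceil (α * M)
    have h2 : (⌈α * M⌉ : ℝ) - 1 < α * M := by linarith [Int.ceil_lt_add_one (α * M)]
    linarith
  have hmem : Set.Ioo c α ∈ nhdsWithin α (Set.Iio α) :=
    Ioo_mem_nhdsLT_of_mem ⟨hcα, le_refl α⟩
  filter_upwards [hmem] with α' hα'
  have h1 : ⌈α' * M⌉ ≤ ⌈α * M⌉ := Int.ceil_le_ceil (by nlinarith [hα'.2])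
  have h2 : ⌈α * M⌉ - 1 < ⌈α' * M⌉ := by
    rw [Int.lt_ceil]
    push_cast
    have := hα'.1
    rw [hc, div_lt_iff₀ hM0] at this
    linarith
  omega

lemma ceil_eventually_irrational {α : ℝ} (hα : Irrational α) (m : ℕ) :
    ∀ᶠ α' in nhds α, ⌈α' * ((m : ℝ) + 1)⌉ = ⌈α * ((m : ℝ) + 1)⌉ := by
  set M : ℝ := (m : ℝ) + 1 with hM
  have hM0 : 0 < M := by positivity
  have hirr : Irrational (α * M) := by
    have : M = ((m + 1 : ℕ) : ℝ) := by push_cast; rw [hM]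
    rw [this]
    exact hα.mul_natCast (Nat.succ_ne_zero m)
  have hne : α * M ≠ (⌈α * M⌉ : ℝ) := fun h => hirr.ne_int _ h
  have hlt : α * M < (⌈α * M⌉ : ℝ) := lt_of_le_of_ne (Int.le_ceil _) hne
  have hgt : (⌈α * M⌉ : ℝ) - 1 < α * M := by linarith [Int.ceil_lt_add_one (α * M)]
  have hmem : Set.Ioo (((⌈α * M⌉ : ℝ) - 1) / M) ((⌈α * M⌉ : ℝ) / M) ∈ nhds α := by
    apply Ioo_mem_nhds
    · rw [div_lt_iff₀ hM0]; linarith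
    · rw [lt_div_iff₀ hM0]; linarith
  filter_upwards [hmem] with α' hα'
  have h1 : ⌈α' * M⌉ ≤ ⌈α * M⌉ := by
    rw [Int.ceil_le]
    have := hα'.2
    rw [lt_div_iff₀ hM0] at this
    nlinarith
  have h2 : ⌈α * M⌉ - 1 < ⌈α' * M⌉ := by
    rw [Int.lt_ceil]
    have := hα'.1
    rw [div_lt_iff₀ hM0] at this
    push_cast
    linarith
  omega

lemma tsum_geom_succ {x : ℝ} (h0 : 0 ≤ x) (h1 : x < 1) :
    ∑' n : ℕ, x ^ (n + 1) = x / (1 - x) := by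
  have : ∀ n : ℕ, x ^ (n + 1) = x ^ n * x := fun n => pow_succ x n
  rw [tsum_congr this, tsum_mul_right, tsum_geometric_of_lt_one h0 h1,
    div_eq_mul_inv, mul_comm]

lemma gd_gap {α₀ α' x : ℝ} (hx0 : 0 < x) (hx1 : x < 1) {p : ℤ} {q : ℕ} (hq : 0 < q)
    (hpq : α₀ * (q : ℝ) = (p : ℝ)) (h : α₀ < α') :
    Gd α₀ x + x ^ q ≤ Gd α' x := by
  have habs : |x| < 1 := by rwa [abs_of_nonneg hx0.le]
  have hG := summable_Gd (α := α₀) habs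
  have hG' := summable_Gd (α := α') habs
  have hD : Summable (fun n : ℕ =>
      ((⌈α' * ((n : ℝ) + 1)⌉ : ℝ) - (⌈α₀ * ((n : ℝ) + 1)⌉ : ℝ)) * x ^ (n + 1)) := by
    apply (hG'.sub hG).congr
    intro n; ring
  have hsum : ∑' n : ℕ, ((⌈α' * ((n : ℝ) + 1)⌉ : ℝ) - (⌈α₀ * ((n : ℝ) + 1)⌉ : ℝ)) * x ^ (n + 1)
      = Gd α' x - Gd α₀ x := by
    rw [Gd, Gd, ← Summable.tsum_sub hG' hG]
    exact tsum_congr fun n => by ring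
  have hnn : ∀ j : ℕ, 0 ≤ ((⌈α' * ((j : ℝ) + 1)⌉ : ℝ) - (⌈α₀ * ((j : ℝ) + 1)⌉ : ℝ)) * x ^ (j + 1) := by
    intro j
    apply mul_nonneg _ (by positivity)
    have h : ⌈α₀ * ((j : ℝ) + 1)⌉ ≤ ⌈α' * ((j : ℝ) + 1)⌉ := Int.ceil_le_ceil (by nlinarith)
    have h' : ((⌈α₀ * ((j : ℝ) + 1)⌉ : ℤ) : ℝ) ≤ ((⌈α' * ((j : ℝ) + 1)⌉ : ℤ) : ℝ) := by
      exact_mod_cast h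
    linarith
  have hterm : x ^ q ≤ ((⌈α' * (((q - 1 : ℕ) : ℝ) + 1)⌉ : ℝ) - (⌈α₀ * (((q - 1 : ℕ) : ℝ) + 1)⌉ : ℝ)) * x ^ ((q - 1) + 1) := by
    have hqe : ((q - 1 : ℕ) : ℝ) + 1 = (q : ℝ) := by
      have : (1 : ℕ) ≤ q := hq
      push_cast [Nat.cast_sub this]; ring
    have hqe' : (q - 1) + 1 = q := Nat.succ_pred_eq_of_pos hq
    rw [hqe, hqe']
    have hc0 : ⌈α₀ * (q : ℝ)⌉ = p := by rw [hpq, Int.ceil_intCast]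
    have hc1 : p + 1 ≤ ⌈α' * (q : ℝ)⌉ := by
      rw [Int.add_one_le_iff, Int.lt_ceil, ← hpq]
      have hq0 : (0 : ℝ) < (q : ℝ) := by exact_mod_cast hq
      nlinarith
    have : (1 : ℝ) ≤ (⌈α' * (q : ℝ)⌉ : ℝ) - (⌈α₀ * (q : ℝ)⌉ : ℝ) := by
      rw [hc0]
      have h' : ((p + 1 : ℤ) : ℝ) ≤ ((⌈α' * (q : ℝ)⌉ : ℤ) : ℝ) := by exact_mod_cast hc1
      push_cast at h' ⊢
      linarith
    nlinarith [pow_nonneg hx0.le q, pow_pos hx0 q]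
  have := Summable.le_tsum hD (q - 1) (fun j _ => hnn j)
  rw [hsum] at this
  linarith [le_trans hterm this]

lemma wd_lower {α₀ x x₀ : ℝ} (hα₀ : 0 ≤ α₀) (hx0 : 0 < x) (hxx : x ≤ x₀) (hx₀1 : x₀ < 1)
    (hW0 : Wd α₀ x₀ = 1) :
    1 - (⌈α₀⌉ : ℝ) * (x₀ / (1 - x₀) - x / (1 - x)) ≤ Wd α₀ x := by
  have hx₀0 : 0 < x₀ := lt_of_lt_of_le hx0 hxx
  have habs : |x| < 1 := by rw [abs_of_nonneg hx0.le]; linarith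
  have habs₀ : |x₀| < 1 := by rw [abs_of_nonneg hx₀0.le]; linarith
  have hW := summable_Wd (α := α₀) habs
  have hW₀ := summable_Wd (α := α₀) habs₀
  have hsub : Wd α₀ x₀ - Wd α₀ x
      = ∑' n : ℕ, ((upperWord α₀ n : ℝ) * x₀ ^ (n + 1) - (upperWord α₀ n : ℝ) * x ^ (n + 1)) := by
    rw [Wd, Wd, Summable.tsum_sub hW₀ hW]
  have hg : ∀ y : ℝ, 0 ≤ y → y < 1 → Summable (fun n : ℕ => y ^ (n + 1)) := by
    intro y h0 h1
    exact ((summable_geometric_of_lt_one h0 h1).mul_right y).congr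
      (fun n => (pow_succ y n).symm)
  have hgeom := (hg x₀ hx₀0.le hx₀1).sub (hg x hx0.le (by linarith))
  have hbnd : Wd α₀ x₀ - Wd α₀ x ≤ (⌈α₀⌉ : ℝ) * (x₀ / (1 - x₀) - x / (1 - x)) := by
    rw [hsub]
    have h1 : ∑' n : ℕ, ((upperWord α₀ n : ℝ) * x₀ ^ (n + 1) - (upperWord α₀ n : ℝ) * x ^ (n + 1))
        ≤ ∑' n : ℕ, (⌈α₀⌉ : ℝ) * (x₀ ^ (n + 1) - x ^ (n + 1)) := by
      apply Summable.tsum_le_tsum _ (hW₀.sub hW) (hgeom.mul_left _)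
      intro n
      have hu0 : (0 : ℝ) ≤ (upperWord α₀ n : ℝ) := by exact_mod_cast upperWord_nonneg hα₀ n
      have hub : (upperWord α₀ n : ℝ) ≤ (⌈α₀⌉ : ℝ) := by exact_mod_cast upperWord_le n
      have hpow : 0 ≤ x₀ ^ (n + 1) - x ^ (n + 1) := by
        have := pow_le_pow_left₀ hx0.le hxx (n + 1)
        linarith
      nlinarith
    calc _ ≤ ∑' n : ℕ, (⌈α₀⌉ : ℝ) * (x₀ ^ (n + 1) - x ^ (n + 1)) := h1
      _ = (⌈α₀⌉ : ℝ) * (x₀ / (1 - x₀) - x / (1 - x)) := by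
          rw [tsum_mul_left, Summable.tsum_sub (hg x₀ hx₀0.le hx₀1) (hg x hx0.le (by linarith)),
            tsum_geom_succ hx₀0.le hx₀1, tsum_geom_succ hx0.le (by linarith)]
  rw [hW0] at hbnd
  linarith

section DeltaMain
variable {Δ : ℝ → ℝ} (hΔ : IsDevilStaircase Δ) {α α₀ : ℝ}
include hΔ

lemma eventually_lt_delta (hα : 0 < α) {c : ℝ} (hc : c < Δ α) {l : Filter ℝ} (hl : l ≤ nhds α)
    (hceil : ∀ m : ℕ, ∀ᶠ α' in l, ⌈α' * ((m : ℝ) + 1)⌉ = ⌈α * ((m : ℝ) + 1)⌉) :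
    ∀ᶠ α' in l, c < Δ α' := by
  have h1 := delta_gt_one hΔ hα
  set β₁ : ℝ := max c ((1 + Δ α) / 2) with hβ₁
  have hβ1 : 1 < β₁ := lt_of_lt_of_le (by linarith) (le_max_right _ _)
  have hβδ : β₁ < Δ α := max_lt hc (by linarith)
  have hW : 1 < Wd α (1 / β₁) := by
    have := wd_strict_anti hα (inv_delta_pos hΔ hα)
      (one_div_lt_one_div_of_lt (by linarith) hβδ)
      (by rw [div_lt_one (by linarith)]; linarith)
    rwa [wd_delta hΔ hα] at this
  have hten := wd_tendsto (x := 1 / β₁) (by positivity)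
    (by rw [div_lt_one (by linarith)]; linarith) hl hceil
  have hev1 : ∀ᶠ α' in l, 1 < Wd α' (1 / β₁) := hten.eventually (eventually_gt_nhds hW)
  have hev2 : ∀ᶠ α' in l, 0 < α' := hl (eventually_gt_nhds hα)
  filter_upwards [hev1, hev2] with α' h1' h2'
  exact lt_of_le_of_lt (le_max_left c _) (lt_delta_of_wd hΔ h2' hβ1 h1')

lemma eventually_delta_lt (hα : 0 < α) {c : ℝ} (hc : Δ α < c) {l : Filter ℝ} (hl : l ≤ nhds α)
    (hceil : ∀ m : ℕ, ∀ᶠ α' in l, ⌈α' * ((m : ℝ) + 1)⌉ = ⌈α * ((m : ℝ) + 1)⌉) :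
    ∀ᶠ α' in l, Δ α' < c := by
  have h1 := delta_gt_one hΔ hα
  set β₂ : ℝ := min c (Δ α + 1) with hβ₂
  have hβδ : Δ α < β₂ := lt_min hc (by linarith)
  have hβ1 : 1 < β₂ := by linarith
  have hW : Wd α (1 / β₂) < 1 := by
    have := wd_strict_anti hα (by positivity : (0:ℝ) < 1 / β₂)
      (one_div_lt_one_div_of_lt (by linarith) hβδ)
      (inv_delta_lt_one hΔ hα)
    rwa [wd_delta hΔ hα] at this
  have hten := wd_tendsto (x := 1 / β₂) (by positivity)
    (by rw [div_lt_one (by linarith)]; linarith) hl hceil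
  have hev1 : ∀ᶠ α' in l, Wd α' (1 / β₂) < 1 := hten.eventually (eventually_lt_nhds hW)
  have hev2 : ∀ᶠ α' in l, 0 < α' := hl (eventually_gt_nhds hα)
  filter_upwards [hev1, hev2] with α' h1' h2'
  exact lt_of_lt_of_le (delta_lt_of_wd hΔ h2' hβ1 h1') (min_le_left _ _)

lemma delta_tendsto_left (hα : 0 < α) :
    Tendsto Δ (nhdsWithin α (Set.Iio α)) (nhds (Δ α)) := by
  apply tendsto_order.2
  constructor
  · intro c hc
    exact eventually_lt_delta hΔ hα hc nhdsWithin_le_nhds (ceil_eventually_left α)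
  · intro c hc
    have hev2 : ∀ᶠ α' in nhdsWithin α (Set.Iio α), 0 < α' :=
      nhdsWithin_le_nhds (eventually_gt_nhds hα)
    filter_upwards [self_mem_nhdsWithin, hev2] with α' h1 h2
    exact lt_of_le_of_lt (delta_mono hΔ h2 (le_of_lt h1)) hc

lemma delta_continuousAt (hα : 0 < α) (hirr : Irrational α) : ContinuousAt Δ α := by
  rw [ContinuousAt]
  apply tendsto_order.2
  exact ⟨fun c hc => eventually_lt_delta hΔ hα hc le_rfl (ceil_eventually_irrational hirr),
    fun c hc => eventually_delta_lt hΔ hα hc le_rfl (ceil_eventually_irrational hirr)⟩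

lemma right_gap (hα₀ : 0 < α₀) {p : ℤ} {q : ℕ} (hq : 0 < q) (hpq : α₀ * (q : ℝ) = (p : ℝ)) :
    ∃ β : ℝ, Δ α₀ < β ∧ ∀ α', α₀ < α' → β < Δ α' := by
  have h1 := delta_gt_one hΔ hα₀
  set x₀ : ℝ := 1 / Δ α₀ with hx₀
  have hx₀0 : 0 < x₀ := inv_delta_pos hΔ hα₀
  have hx₀1 : x₀ < 1 := inv_delta_lt_one hΔ hα₀
  set b : ℝ := (⌈α₀⌉ : ℝ) with hb
  set φ : ℝ → ℝ := fun x => (1 - x) * x ^ q - b * (x₀ / (1 - x₀) - x / (1 - x)) with hφ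
  have hφc : ContinuousAt φ x₀ := by
    apply ContinuousAt.sub
    · exact ((continuousAt_const.sub continuousAt_id).mul (continuousAt_id.pow q))
    · apply continuousAt_const.mul
      apply continuousAt_const.sub
      exact continuousAt_id.div (continuousAt_const.sub continuousAt_id) (by simp; linarith)
  have hφ0 : 0 < φ x₀ := by
    have : φ x₀ = (1 - x₀) * x₀ ^ q := by rw [hφ]; simp
    rw [this]
    have := pow_pos hx₀0 q
    nlinarith
  have hten : Tendsto φ (nhdsWithin x₀ (Set.Iio x₀)) (nhds (φ x₀)) :=
    hφc.tendsto.mono_left nhdsWithin_le_nhds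
  have hev1 : ∀ᶠ x in nhdsWithin x₀ (Set.Iio x₀), 0 < φ x :=
    hten.eventually (eventually_gt_nhds hφ0)
  have hev2 : ∀ᶠ x in nhdsWithin x₀ (Set.Iio x₀), 0 < x :=
    nhdsWithin_le_nhds (eventually_gt_nhds hx₀0)
  obtain ⟨x, hφx, hx0, hmem⟩ := (hev1.and (hev2.and self_mem_nhdsWithin)).exists
  have hxx₀ : x < x₀ := hmem
  have hx1 : x < 1 := lt_trans hxx₀ hx₀1
  have habs : |x| < 1 := by rw [abs_of_nonneg hx0.le]; exact hx1
  have habs₀ : |x₀| < 1 := by rw [abs_of_nonneg hx₀0.le]; exact hx₀1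
  refine ⟨1 / x, ?_, ?_⟩
  · calc Δ α₀ = 1 / (1 / Δ α₀) := by rw [one_div_one_div]
      _ < 1 / x := one_div_lt_one_div_of_lt hx0 hxx₀
  · intro α' hαα'
    have hα' : 0 < α' := lt_trans hα₀ hαα'
    apply lt_delta_of_wd hΔ hα' (one_lt_one_div hx0 hx1)
    rw [one_div_one_div]
    have hWαx := wd_lower hα₀.le hx0 hxx₀.le hx₀1 (wd_delta hΔ hα₀)
    have hgap := gd_gap hx0 hx1 hq hpq hαα'
    have e1 : Wd α' x = (1 - x) * Gd α' x := wd_eq_gd habs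
    have e2 : Wd α₀ x = (1 - x) * Gd α₀ x := wd_eq_gd habs
    have h3 : Wd α₀ x + (1 - x) * x ^ q ≤ Wd α' x := by
      rw [e1, e2]; nlinarith
    have h4 : 1 + φ x ≤ Wd α₀ x + (1 - x) * x ^ q := by
      have : φ x = (1 - x) * x ^ q - b * (x₀ / (1 - x₀) - x / (1 - x)) := rfl
      rw [this]; linarith
    linarith

end DeltaMain

/-- `Δ` is continuous at every positive irrational point; at every positive rational point
it is left-continuous but not right-continuous. -/
theorem devilStaircase_continuity (Δ : ℝ → ℝ) (hΔ : IsDevilStaircase Δ) :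
    (∀ α : ℝ, 0 < α → Irrational α → ContinuousAt Δ α) ∧
    (∀ α₀ : ℝ, 0 < α₀ → (∃ r : ℚ, (r : ℝ) = α₀) →
      Tendsto Δ (nhdsWithin α₀ (Set.Iio α₀)) (nhds (Δ α₀)) ∧
      ¬ Tendsto Δ (nhdsWithin α₀ (Set.Ioi α₀)) (nhds (Δ α₀))) := by
  constructor
  · intro α hα hirr
    exact delta_continuousAt hΔ hα hirr
  · rintro α₀ hα₀ ⟨r, hr⟩
    refine ⟨delta_tendsto_left hΔ hα₀, ?_⟩
    have hq : 0 < r.den := r.pos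
    have hpq : α₀ * ((r.den : ℕ) : ℝ) = ((r.num : ℤ) : ℝ) := by
      rw [← hr]
      have h : (r : ℚ) * (r.den : ℚ) = (r.num : ℚ) := by
        exact_mod_cast Rat.mul_den_eq_num r
      exact_mod_cast h
    obtain ⟨β, hβ1, hβ2⟩ := right_gap hΔ hα₀ hq hpq
    intro hT
    have hev1 : ∀ᶠ α' in nhdsWithin α₀ (Set.Ioi α₀), Δ α' < β :=
      hT.eventually (eventually_lt_nhds hβ1)
    obtain ⟨α', h1, h2⟩ := (hev1.and self_mem_nhdsWithin).exists
    exact absurd (hβ2 α' h2) (not_lt.mpr h1.le)
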